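/- Define A_r(m) by A_0(m) = 1 and A_r(m) = Σ_{j=1}^{r} (-1)^{j-1} binom(m, j) A_{r-j}(m). Then for all m ≥ 1 and r ≥ 1, A_r(m) = Σ_{l=1}^{m} A_{r-1}(l). -/

import Mathlib

/-- The iterated-difference coefficients `A r m`. -/
def iterDiffCoeff (m : ℕ) : ℕ → ℤ
  | 0 => 1
  | (r + 1) =>
      ∑ j ∈ Finset.range (r + 1),
        (-1) ^ j * (m.choose (j + 1) : ℤ) * iterDiffCoeff m (r - j)

lemma iterDiffCoeff_succ (m r : ℕ) :
    iterDiffCoeff m (r+1) = ∑ j ∈ Finset.range (r + 1),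
        (-1) ^ j * (m.choose (j + 1) : ℤ) * iterDiffCoeff m (r - j) := by
  rw [iterDiffCoeff]

lemma iterDiffCoeff_zero (m : ℕ) : iterDiffCoeff m 0 = 1 := by
  rw [iterDiffCoeff]

lemma iterDiffCoeff_zero_left (r : ℕ) : iterDiffCoeff 0 (r+1) = 0 := by
  rw [iterDiffCoeff_succ]
  simp

lemma iterDiffCoeff_diff : ∀ r m : ℕ,
    iterDiffCoeff (m+1) (r+1) - iterDiffCoeff m (r+1) = iterDiffCoeff (m+1) r := by
  intro r
  induction r using Nat.strong_induction_on with
  | _ r ih =>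
  intro m
  have hS1 : ∑ j ∈ Finset.range (r+1), (-1:ℤ)^j * (m.choose (j+1) : ℤ) *
      (iterDiffCoeff (m+1) (r-j) - iterDiffCoeff m (r-j))
      = ∑ j ∈ Finset.range r,
        (-1:ℤ)^j * (m.choose (j+1) : ℤ) * iterDiffCoeff (m+1) (r-1-j) := by
    rw [Finset.sum_range_succ, Nat.sub_self]
    simp only [iterDiffCoeff_zero, sub_self, mul_zero, add_zero]
    refine Finset.sum_congr rfl fun j hj => ?_
    have hj' : j < r := Finset.mem_range.mp hj
    have h1 : r - j = (r - 1 - j) + 1 := by omega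
    rw [h1, ih (r-1-j) (by omega) m]
  have hT2 : ∑ j ∈ Finset.range (r+1), (-1:ℤ)^j * (m.choose j : ℤ) *
      iterDiffCoeff (m+1) (r-j)
      = iterDiffCoeff (m+1) r - ∑ j ∈ Finset.range r,
        (-1:ℤ)^j * (m.choose (j+1) : ℤ) * iterDiffCoeff (m+1) (r-1-j) := by
    rw [Finset.sum_range_succ']
    simp only [Nat.choose_zero_right, Nat.cast_one, pow_zero, one_mul, Nat.sub_zero]
    have hterm : ∀ k ∈ Finset.range r, (-1:ℤ)^(k+1) * (m.choose (k+1) : ℤ) *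
        iterDiffCoeff (m+1) (r-(k+1))
        = -((-1:ℤ)^k * (m.choose (k+1) : ℤ) * iterDiffCoeff (m+1) (r-1-k)) := by
      intro k hk
      rw [show r - (k+1) = r - 1 - k from by omega]
      ring
    rw [Finset.sum_congr rfl hterm, Finset.sum_neg_distrib]
    ring
  rw [iterDiffCoeff_succ (m+1) r, iterDiffCoeff_succ m r]
  have hsplit : ∑ j ∈ Finset.range (r+1), (-1:ℤ)^j * ((m+1).choose (j+1) : ℤ) *
      iterDiffCoeff (m+1) (r-j)
      = ∑ j ∈ Finset.range (r+1), (-1:ℤ)^j * (m.choose (j+1) : ℤ) * iterDiffCoeff (m+1) (r-j)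
        + ∑ j ∈ Finset.range (r+1), (-1:ℤ)^j * (m.choose j : ℤ) * iterDiffCoeff (m+1) (r-j) := by
    rw [← Finset.sum_add_distrib]
    refine Finset.sum_congr rfl fun j _ => ?_
    rw [Nat.choose_succ_succ]
    push_cast
    ring
  have hsub : ∑ j ∈ Finset.range (r+1), (-1:ℤ)^j * (m.choose (j+1) : ℤ) *
      iterDiffCoeff (m+1) (r-j)
      - ∑ j ∈ Finset.range (r+1), (-1:ℤ)^j * (m.choose (j+1) : ℤ) * iterDiffCoeff m (r-j)
      = ∑ j ∈ Finset.range (r+1), (-1:ℤ)^j * (m.choose (j+1) : ℤ) *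
        (iterDiffCoeff (m+1) (r-j) - iterDiffCoeff m (r-j)) := by
    rw [← Finset.sum_sub_distrib]
    refine Finset.sum_congr rfl fun j _ => ?_
    ring
  linarith [hS1, hT2, hsplit, hsub]

lemma iterDiffCoeff_aux (s m : ℕ) :
    iterDiffCoeff m (s+1) = ∑ l ∈ Finset.Icc 1 m, iterDiffCoeff l s := by
  induction m with
  | zero => rw [iterDiffCoeff_zero_left]; simp
  | succ m ihm =>
    rw [Finset.sum_Icc_succ_top (by omega : 1 ≤ m + 1), ← ihm, ← iterDiffCoeff_diff s m]
    ring

/-- For all `m ≥ 1` and `r ≥ 1`, `A r m = Σ_{l=1}^m A (r-1) l`. -/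
theorem iterDiffCoeff_rec (m r : ℕ) (hm : 1 ≤ m) (hr : 1 ≤ r) :
    iterDiffCoeff m r = ∑ l ∈ Finset.Icc 1 m, iterDiffCoeff l (r - 1) := by
  obtain ⟨s, rfl⟩ : ∃ s, r = s + 1 := ⟨r - 1, by omega⟩
  simpa using iterDiffCoeff_aux s m
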